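/- The relative interior of the max-front polyhedron P^{f⋆} is contained in the lex-polyhedron P^lex, and P^lex is contained in P^{f⋆}; equivalently, P^{f⋆} is the topological closure of P^lex. -/
import Mathlib


/-- The space of points `(x, s)` of a lex-polyhedron in standard form, with
slack blocks `s i : Fin (d i) → ℝ`. -/
abbrev Pt (m N : ℕ) (d : Fin m → ℕ) : Type :=
  (Fin N → ℝ) × ((i : Fin m) → Fin (d i) → ℝ)

/-- The equality constraints `A x + s = b`. -/
def satEq (m N : ℕ) (d : Fin m → ℕ)
    (A : (i : Fin m) → Fin (d i) → Fin N → ℝ)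
    (b : (i : Fin m) → Fin (d i) → ℝ) (p : Pt m N d) : Prop :=
  ∀ i j, (∑ k, A i j k * p.1 k) + p.2 i j = b i j

/-- Lexicographic nonnegativity: `v = 0` or the first nonzero entry of `v` is
positive. -/
def lexNonneg (n : ℕ) (v : Fin n → ℝ) : Prop :=
  v = 0 ∨ ∃ j, (∀ k, k < j → v k = 0) ∧ 0 < v j

/-- The lex-polyhedron `P^lex` in standard form. -/
def Plex (m N : ℕ) (d : Fin m → ℕ)
    (A : (i : Fin m) → Fin (d i) → Fin N → ℝ)
    (b : (i : Fin m) → Fin (d i) → ℝ) : Set (Pt m N d) :=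
  {p | satEq m N d A b p ∧ ∀ i, lexNonneg (d i) (p.2 i)}

/-- A front (0-based): `f i ∈ {0, …, d i}` for each `i`. -/
def IsFront (m : ℕ) (d : Fin m → ℕ) (f : Fin m → ℕ) : Prop :=
  ∀ i, f i ≤ d i

/-- The closed convex polyhedron `P^f` associated with a front `f`: the first
`f i` slacks of block `i` vanish, and the next one (if any) is nonnegative. -/
def Pfront (m N : ℕ) (d : Fin m → ℕ)
    (A : (i : Fin m) → Fin (d i) → Fin N → ℝ)
    (b : (i : Fin m) → Fin (d i) → ℝ) (f : Fin m → ℕ) : Set (Pt m N d) :=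
  {p | satEq m N d A b p ∧ (∀ i, ∀ j : Fin (d i), (j : ℕ) < f i → p.2 i j = 0) ∧
    (∀ i, ∀ h : f i < d i, 0 ≤ p.2 i ⟨f i, h⟩)}

/-- The defining property of the max-front `f⋆`. -/
def IsMaxFront (m N : ℕ) (d : Fin m → ℕ)
    (A : (i : Fin m) → Fin (d i) → Fin N → ℝ)
    (b : (i : Fin m) → Fin (d i) → ℝ) (fstar : Fin m → ℕ) : Prop :=
  ∀ i, IsGreatest
    {j | j ≤ d i ∧ ∀ p ∈ Plex m N d A b, ∀ k : Fin (d i), (k : ℕ) < j → p.2 i k = 0}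
    (fstar i)

section Aux

lemma lexNonneg_char {n : ℕ} {v : Fin n → ℝ} :
    lexNonneg n v ↔ ∀ j, (∀ k, k < j → v k = 0) → 0 ≤ v j := by
  constructor
  · rintro (h0 | ⟨j0, hz, hpos⟩) j hj
    · simp [h0]
    · rcases lt_trichotomy j j0 with h | h | h
      · rw [hz j h]
      · exact h ▸ le_of_lt hpos
      · exact absurd (hj j0 h) (ne_of_gt hpos)
  · intro h
    by_cases h0 : v = 0
    · exact Or.inl h0
    · right
      have hne : (Finset.univ.filter (fun j => v j ≠ 0)).Nonempty := by
        by_contra hc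
        apply h0
        funext j
        by_contra hj
        exact hc ⟨j, Finset.mem_filter.mpr ⟨Finset.mem_univ j, hj⟩⟩
      set j0 := (Finset.univ.filter (fun j => v j ≠ 0)).min' hne with hj0
      have hj0mem := (Finset.univ.filter (fun j => v j ≠ 0)).min'_mem hne
      have hj0ne : v j0 ≠ 0 := (Finset.mem_filter.mp hj0mem).2
      have hzlt : ∀ k, k < j0 → v k = 0 := by
        intro k hk
        by_contra hkne
        exact absurd (Finset.min'_le _ k (Finset.mem_filter.mpr ⟨Finset.mem_univ k, hkne⟩))
          (not_le_of_gt hk)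
      exact ⟨j0, hzlt, lt_of_le_of_ne (h j0 hzlt) (Ne.symm hj0ne)⟩

lemma lexNonneg_combo {n : ℕ} {v w : Fin n → ℝ} {a c : ℝ}
    (ha : 0 ≤ a) (hc : 0 ≤ c) (hv : lexNonneg n v) (hw : lexNonneg n w) :
    lexNonneg n (fun j => a * v j + c * w j) := by
  rcases ha.lt_or_eq with ha' | rfl
  · rcases hc.lt_or_eq with hc' | rfl
    · rw [lexNonneg_char] at hv hw ⊢
      intro j hz
      have key : ∀ nn : ℕ, ∀ k : Fin n, (k : ℕ) < nn → k < j → v k = 0 ∧ w k = 0 := by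
        intro nn
        induction nn with
        | zero => intro k hk _; omega
        | succ nn ih =>
          intro k hk hkj
          have hzk : ∀ k', k' < k → v k' = 0 ∧ w k' = 0 := by
            intro k' hk'
            exact ih k' (by omega) (lt_trans hk' hkj)
          have hvk : 0 ≤ v k := hv k (fun k' h => (hzk k' h).1)
          have hwk : 0 ≤ w k := hw k (fun k' h => (hzk k' h).2)
          have hsum := hz k hkj
          constructor <;> nlinarith
      have hvj : 0 ≤ v j := hv j (fun k h => (key n k k.2 h).1)
      have hwj : 0 ≤ w j := hw j (fun k h => (key n k k.2 h).2)
      positivity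
    · rcases hv with h0 | ⟨j, hz, hpos⟩
      · left; funext j; simp [show v j = 0 from congrFun h0 j]
      · right; exact ⟨j, fun k hk => by simp [hz k hk], by simpa using mul_pos ha' hpos⟩
  · rcases hw with h0 | ⟨j, hz, hpos⟩
    · left; funext j; simp [show w j = 0 from congrFun h0 j]
    · rcases hc.lt_or_eq with hc' | rfl
      · right; exact ⟨j, fun k hk => by simp [hz k hk], by simpa using mul_pos hc' hpos⟩
      · left; funext j; simp

variable {m N : ℕ} {d : Fin m → ℕ}
  {A : (i : Fin m) → Fin (d i) → Fin N → ℝ}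
  {b : (i : Fin m) → Fin (d i) → ℝ} {fstar : Fin m → ℕ}

lemma pt_snd_combo (p q : Pt m N d) (a c : ℝ) (i : Fin m) (j : Fin (d i)) :
    (a • p + c • q).2 i j = a * p.2 i j + c * q.2 i j := rfl

lemma pt_fst_combo (p q : Pt m N d) (a c : ℝ) (k : Fin N) :
    (a • p + c • q).1 k = a * p.1 k + c * q.1 k := rfl

lemma satEq_combo {p q : Pt m N d} (hp : satEq m N d A b p) (hq : satEq m N d A b q)
    {a c : ℝ} (hac : a + c = 1) : satEq m N d A b (a • p + c • q) := by
  intro i j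
  have h1 := hp i j
  have h2 := hq i j
  have hsum : (∑ k, A i j k * (a • p + c • q).1 k)
      = a * (∑ k, A i j k * p.1 k) + c * (∑ k, A i j k * q.1 k) := by
    rw [Finset.mul_sum, Finset.mul_sum, ← Finset.sum_add_distrib]
    exact Finset.sum_congr rfl fun k _ => by rw [pt_fst_combo]; ring
  rw [hsum, pt_snd_combo]
  linear_combination a * h1 + c * h2 + (b i j) * hac

lemma plex_combo {p q : Pt m N d} (hp : p ∈ Plex m N d A b) (hq : q ∈ Plex m N d A b)
    {a c : ℝ} (ha : 0 ≤ a) (hc : 0 ≤ c) (hac : a + c = 1) :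
    a • p + c • q ∈ Plex m N d A b := by
  refine ⟨satEq_combo hp.1 hq.1 hac, fun i => ?_⟩
  have : (a • p + c • q).2 i = fun j => a * p.2 i j + c * q.2 i j := rfl
  rw [this]
  exact lexNonneg_combo ha hc (hp.2 i) (hq.2 i)

lemma plex_front_zero (hstar : IsMaxFront m N d A b fstar)
    {p : Pt m N d} (hp : p ∈ Plex m N d A b) (i : Fin m) (k : Fin (d i))
    (hk : (k : ℕ) < fstar i) : p.2 i k = 0 :=
  (hstar i).1.2 p hp k hk

lemma Plex_subset_Pfront (hstar : IsMaxFront m N d A b fstar) :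
    Plex m N d A b ⊆ Pfront m N d A b fstar := by
  rintro p ⟨hsat, hlex⟩
  refine ⟨hsat, fun i j hj => plex_front_zero hstar ⟨hsat, hlex⟩ i j hj, ?_⟩
  intro i h
  rcases hlex i with h0 | ⟨j, hjz, hjpos⟩
  · simp [h0]
  · rcases lt_trichotomy (j : ℕ) (fstar i) with hlt | heq | hgt
    · exact absurd (plex_front_zero hstar ⟨hsat, hlex⟩ i j hlt) (ne_of_gt hjpos)
    · have : j = ⟨fstar i, h⟩ := Fin.ext heq
      rw [← this]; exact le_of_lt hjpos
    · exact le_of_eq (hjz ⟨fstar i, h⟩ (by simp [Fin.lt_def, hgt])).symm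

/-- key combination lemma -/
lemma combo_mem_Plex (hstar : IsMaxFront m N d A b fstar)
    {p q : Pt m N d} (hp : p ∈ Pfront m N d A b fstar) (hq : q ∈ Plex m N d A b)
    (hqpos : ∀ i (h : fstar i < d i), 0 < q.2 i ⟨fstar i, h⟩)
    {a c : ℝ} (ha : 0 ≤ a) (hc : 0 < c) (hac : a + c = 1) :
    a • p + c • q ∈ Plex m N d A b := by
  have hq' := Plex_subset_Pfront hstar hq
  refine ⟨satEq_combo hp.1 hq.1 hac, fun i => ?_⟩
  by_cases h : fstar i < d i
  · refine Or.inr ⟨⟨fstar i, h⟩, ?_, ?_⟩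
    · intro k hk
      have hk' : (k : ℕ) < fstar i := hk
      rw [pt_snd_combo, hp.2.1 i k hk', hq'.2.1 i k hk']; ring
    · rw [pt_snd_combo]
      have h1 := hp.2.2 i h
      have h2 := hqpos i h
      nlinarith
  · push_neg at h
    left
    funext j
    have hj : (j : ℕ) < fstar i := lt_of_lt_of_le j.2 h
    have := pt_snd_combo p q a c i j
    rw [hp.2.1 i j hj, hq'.2.1 i j hj] at this
    simpa using this

lemma exists_plex_pos (hstar : IsMaxFront m N d A b fstar)
    (hne : (Plex m N d A b).Nonempty) :
    ∃ q ∈ Plex m N d A b, ∀ i (h : fstar i < d i), 0 < q.2 i ⟨fstar i, h⟩ := by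
  have hsingle : ∀ i (h : fstar i < d i),
      ∃ q ∈ Plex m N d A b, 0 < q.2 i ⟨fstar i, h⟩ := by
    intro i h
    have hnotmem : fstar i + 1 ∉
        {j | j ≤ d i ∧ ∀ p ∈ Plex m N d A b, ∀ k : Fin (d i), (k : ℕ) < j → p.2 i k = 0} := by
      intro hmem
      exact absurd ((hstar i).2 hmem) (by omega)
    simp only [Set.mem_setOf_eq, not_and, not_forall] at hnotmem
    obtain ⟨q, hq, k, hk, hkne⟩ := hnotmem h
    have hkeq : (k : ℕ) = fstar i := by
      rcases lt_or_eq_of_le (Nat.lt_succ_iff.mp hk) with hlt | heq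
      · exact absurd (plex_front_zero hstar hq i k hlt) hkne
      · exact heq
    refine ⟨q, hq, ?_⟩
    have hkk : k = ⟨fstar i, h⟩ := Fin.ext hkeq
    rw [← hkk]
    rcases hq.2 i with h0 | ⟨j, hjz, hjpos⟩
    · exact absurd (by simp [h0]) hkne
    · rcases lt_trichotomy j k with hlt | heq | hgt
      · have : (j : ℕ) < fstar i := hkeq ▸ hlt
        exact absurd (plex_front_zero hstar hq i j this) (ne_of_gt hjpos)
      · exact heq ▸ hjpos
      · exact absurd (hjz k hgt) hkne
  have main : ∀ I : Finset (Fin m), ∃ q ∈ Plex m N d A b,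
      ∀ i ∈ I, ∀ (h : fstar i < d i), 0 < q.2 i ⟨fstar i, h⟩ := by
    intro I
    induction I using Finset.induction_on with
    | empty => obtain ⟨q, hq⟩ := hne; exact ⟨q, hq, by simp⟩
    | @insert i I hiI ih =>
      obtain ⟨q, hq, hqI⟩ := ih
      by_cases h : fstar i < d i
      · obtain ⟨q', hq', hq'pos⟩ := hsingle i h
        refine ⟨(1/2 : ℝ) • q + (1/2 : ℝ) • q', plex_combo hq hq' (by norm_num) (by norm_num)
          (by norm_num), ?_⟩
        intro i' hi' h'
        rw [pt_snd_combo]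
        have hqnn : 0 ≤ q.2 i' ⟨fstar i', h'⟩ := (Plex_subset_Pfront hstar hq).2.2 i' h'
        have hq'nn : 0 ≤ q'.2 i' ⟨fstar i', h'⟩ := (Plex_subset_Pfront hstar hq').2.2 i' h'
        rcases Finset.mem_insert.mp hi' with rfl | hi'I
        · have := hq'pos
          nlinarith [hq'pos]
        · nlinarith [hqI i' hi'I h']
      · refine ⟨q, hq, ?_⟩
        intro i' hi' h'
        rcases Finset.mem_insert.mp hi' with rfl | hi'I
        · exact absurd h' h
        · exact hqI i' hi'I h'
  obtain ⟨q, hq, hq'⟩ := main Finset.univ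
  exact ⟨q, hq, fun i h => hq' i (Finset.mem_univ i) h⟩

lemma isClosed_Pfront : IsClosed (Pfront m N d A b fstar) := by
  have h1 : IsClosed {p : Pt m N d | satEq m N d A b p} := by
    have : {p : Pt m N d | satEq m N d A b p}
        = ⋂ i, ⋂ j, {p : Pt m N d | (∑ k, A i j k * p.1 k) + p.2 i j = b i j} := by
      ext p; simp [satEq, Set.mem_iInter]
    rw [this]
    refine isClosed_iInter fun i => isClosed_iInter fun j => isClosed_eq ?_ continuous_const
    apply Continuous.add
    · exact continuous_finset_sum _ fun k _ =>
        (continuous_const.mul ((continuous_apply k).comp continuous_fst))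
    · exact ((continuous_apply j).comp ((continuous_apply i).comp continuous_snd))
  have h2 : IsClosed {p : Pt m N d | ∀ i, ∀ j : Fin (d i), (j : ℕ) < fstar i → p.2 i j = 0} := by
    have : {p : Pt m N d | ∀ i, ∀ j : Fin (d i), (j : ℕ) < fstar i → p.2 i j = 0}
        = ⋂ i, ⋂ j : Fin (d i), ⋂ _h : (j : ℕ) < fstar i, {p : Pt m N d | p.2 i j = 0} := by
      ext p; simp [Set.mem_iInter]
    rw [this]
    exact isClosed_iInter fun i => isClosed_iInter fun j => isClosed_iInter fun _ =>
      isClosed_eq ((continuous_apply j).comp ((continuous_apply i).comp continuous_snd))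
        continuous_const
  have h3 : IsClosed {p : Pt m N d | ∀ i, ∀ h : fstar i < d i, 0 ≤ p.2 i ⟨fstar i, h⟩} := by
    have : {p : Pt m N d | ∀ i, ∀ h : fstar i < d i, 0 ≤ p.2 i ⟨fstar i, h⟩}
        = ⋂ i, ⋂ h : fstar i < d i, {p : Pt m N d | 0 ≤ p.2 i ⟨fstar i, h⟩} := by
      ext p; simp [Set.mem_iInter]
    rw [this]
    exact isClosed_iInter fun i => isClosed_iInter fun h =>
      isClosed_le continuous_const
        ((continuous_apply _).comp ((continuous_apply i).comp continuous_snd))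
  have : Pfront m N d A b fstar = {p : Pt m N d | satEq m N d A b p}
      ∩ ({p : Pt m N d | ∀ i, ∀ j : Fin (d i), (j : ℕ) < fstar i → p.2 i j = 0}
        ∩ {p : Pt m N d | ∀ i, ∀ h : fstar i < d i, 0 ≤ p.2 i ⟨fstar i, h⟩}) := by
    ext p; simp only [Pfront, Set.mem_setOf_eq, Set.mem_inter_iff]
  rw [this]
  exact h1.inter (h2.inter h3)

/-- In the degenerate case where all fronts are full, `Pfront ⊆ Plex`. -/
lemma Pfront_subset_Plex_of_full (hall : ∀ i, d i ≤ fstar i) :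
    Pfront m N d A b fstar ⊆ Plex m N d A b := by
  rintro p ⟨hsat, hz, _⟩
  refine ⟨hsat, fun i => Or.inl ?_⟩
  funext j
  exact hz i j (lt_of_lt_of_le j.2 (hall i))

end Aux


/-- `relint P^{f⋆} ⊆ P^lex ⊆ P^{f⋆}`; equivalently `P^{f⋆}` is the closure of
`P^lex`. -/
theorem relint_maxFront_subset_Plex (m N : ℕ) (d : Fin m → ℕ)
    (hd : ∀ i, 1 ≤ d i)
    (A : (i : Fin m) → Fin (d i) → Fin N → ℝ)
    (b : (i : Fin m) → Fin (d i) → ℝ) (fstar : Fin m → ℕ)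
    (hstar : IsMaxFront m N d A b fstar) :
    intrinsicInterior ℝ (Pfront m N d A b fstar) ⊆ Plex m N d A b ∧
      Plex m N d A b ⊆ Pfront m N d A b fstar ∧
      closure (Plex m N d A b) = Pfront m N d A b fstar := by
  have hsub := Plex_subset_Pfront hstar
  by_cases hall : ∀ i, d i ≤ fstar i
  · -- degenerate: Plex = Pfront
    have heq : Plex m N d A b = Pfront m N d A b fstar :=
      Set.Subset.antisymm hsub (Pfront_subset_Plex_of_full hall)
    refine ⟨?_, hsub, ?_⟩
    · rw [← heq] at *
      exact intrinsicInterior_subset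
    · rw [heq]
      exact isClosed_Pfront.closure_eq
  · push_neg at hall
    obtain ⟨i0, hi0⟩ := hall
    -- Plex is nonempty
    have hne : (Plex m N d A b).Nonempty := by
      obtain ⟨q, hq, _⟩ := by
        have hnotmem : fstar i0 + 1 ∉
            {j | j ≤ d i0 ∧ ∀ p ∈ Plex m N d A b, ∀ k : Fin (d i0), (k : ℕ) < j → p.2 i0 k = 0} := by
          intro hmem
          exact absurd ((hstar i0).2 hmem) (by omega)
        simp only [Set.mem_setOf_eq, not_and, not_forall] at hnotmem
        exact hnotmem hi0
      exact ⟨q, hq⟩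
    obtain ⟨q, hq, hqpos⟩ := exists_plex_pos hstar hne
    -- Pfront ⊆ closure Plex
    have hdense : Pfront m N d A b fstar ⊆ closure (Plex m N d A b) := by
      intro p hp
      have hmem : ∀ n : ℕ, (1 - (1 / (n + 1) : ℝ)) • p + (1 / (n + 1) : ℝ) • q
          ∈ Plex m N d A b := by
        intro n
        refine combo_mem_Plex hstar hp hq hqpos ?_ ?_ (by ring)
        · have : (1 / (n + 1) : ℝ) ≤ 1 := by
            rw [div_le_one (by positivity)]; linarith [Nat.cast_nonneg (α := ℝ) n]
          linarith
        · positivity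
      have htend : Filter.Tendsto
          (fun n : ℕ => (1 - (1 / (n + 1) : ℝ)) • p + (1 / (n + 1) : ℝ) • q)
          Filter.atTop (nhds p) := by
        have h0 : Filter.Tendsto (fun n : ℕ => (1 / (n + 1) : ℝ)) Filter.atTop (nhds 0) :=
          tendsto_one_div_add_atTop_nhds_zero_nat
        have := ((h0.const_sub 1).smul_const p).add (h0.smul_const q)
        simpa using this
      exact mem_closure_of_tendsto htend (Filter.Eventually.of_forall hmem)
    have hclosure : closure (Plex m N d A b) = Pfront m N d A b fstar := by
      refine Set.Subset.antisymm ?_ hdense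
      calc closure (Plex m N d A b) ⊆ closure (Pfront m N d A b fstar) := closure_mono hsub
        _ = Pfront m N d A b fstar := isClosed_Pfront.closure_eq
    refine ⟨?_, hsub, hclosure⟩
    -- relint ⊆ Plex
    intro p hp
    obtain ⟨x, hxint, hxeq⟩ := hp
    have hpP : p ∈ Pfront m N d A b fstar := intrinsicInterior_subset ⟨x, hxint, hxeq⟩
    have hpspan : p ∈ affineSpan ℝ (Pfront m N d A b fstar) :=
      subset_affineSpan ℝ _ hpP
    have hqspan : q ∈ affineSpan ℝ (Pfront m N d A b fstar) :=
      subset_affineSpan ℝ _ (hsub hq)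
    -- the curve t ↦ p + t • (p - q) inside the affine span
    have hcurve : ∀ t : ℝ, p + t • (p - q) ∈ affineSpan ℝ (Pfront m N d A b fstar) := by
      intro t
      have := AffineSubspace.smul_vsub_vadd_mem (affineSpan ℝ (Pfront m N d A b fstar)) t
        hpspan hqspan hpspan
      simpa [vsub_eq_sub, vadd_eq_add, add_comm] using this
    set γ : ℝ → affineSpan ℝ (Pfront m N d A b fstar) :=
      fun t => ⟨p + t • (p - q), hcurve t⟩ with hγ
    have hγcont : Continuous γ := by
      refine Continuous.subtype_mk ?_ _
      exact continuous_const.add (continuous_id.smul continuous_const)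
    have hγ0 : γ 0 = x := by
      apply Subtype.ext
      simp [hγ, hxeq]
    have hopen : IsOpen (γ ⁻¹' (interior ((↑) ⁻¹' Pfront m N d A b fstar :
        Set (affineSpan ℝ (Pfront m N d A b fstar))))) :=
      isOpen_interior.preimage hγcont
    have h0mem : (0 : ℝ) ∈ γ ⁻¹' (interior ((↑) ⁻¹' Pfront m N d A b fstar :
        Set (affineSpan ℝ (Pfront m N d A b fstar)))) := by
      simp only [Set.mem_preimage, hγ0]
      exact hxint
    obtain ⟨ε, hε, hball⟩ := Metric.isOpen_iff.mp hopen 0 h0mem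
    have hmemr : (ε / 2 : ℝ) ∈ γ ⁻¹' (interior ((↑) ⁻¹' Pfront m N d A b fstar :
        Set (affineSpan ℝ (Pfront m N d A b fstar)))) := by
      apply hball
      rw [Metric.mem_ball, Real.dist_eq, sub_zero, abs_of_pos (by positivity)]
      linarith
    set t := (ε / 2 : ℝ) with ht
    have htpos : 0 < t := by positivity
    have hrmem : p + t • (p - q) ∈ Pfront m N d A b fstar := by
      have := interior_subset hmemr
      simpa [hγ] using this
    -- p = (1/(1+t)) • r + (t/(1+t)) • q
    have hcombo : (1 / (1 + t)) • (p + t • (p - q)) + (t / (1 + t)) • q = p := by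
      have h1t : (1 + t) ≠ 0 := by positivity
      have hfst : ∀ k, ((1 / (1 + t)) • (p + t • (p - q)) + (t / (1 + t)) • q).1 k = p.1 k := by
        intro k
        have h : ((1 / (1 + t)) • (p + t • (p - q)) + (t / (1 + t)) • q).1 k
            = (1 / (1 + t)) * (p.1 k + t * (p.1 k - q.1 k)) + (t / (1 + t)) * q.1 k := rfl
        rw [h]; field_simp; ring
      have hsnd : ∀ i (j : Fin (d i)),
          ((1 / (1 + t)) • (p + t • (p - q)) + (t / (1 + t)) • q).2 i j = p.2 i j := by
        intro i j
        have h : ((1 / (1 + t)) • (p + t • (p - q)) + (t / (1 + t)) • q).2 i j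
            = (1 / (1 + t)) * (p.2 i j + t * (p.2 i j - q.2 i j)) + (t / (1 + t)) * q.2 i j := rfl
        rw [h]; field_simp; ring
      exact Prod.ext (funext hfst) (funext fun i => funext fun j => hsnd i j)
    rw [← hcombo]
    exact combo_mem_Plex hstar hrmem hq hqpos (by positivity) (by positivity)
      (by field_simp)
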